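/- Let H be a separable complex Hilbert space, let P be a bounded idempotent operator on H, and let J be a symmetry with JPJ = I - P*. Then the Hilbert space dimension of the range of P equals the Hilbert space dimension of its orthogonal complement, and J is anti-diagonal with respect to the decomposition H = R(P) ⊕ R(P)^⊥; that is, writing Q for the orthogonal projection onto R(P), one has Q J Q = 0 and (I - Q) J (I - Q) = 0. -/

import Mathlib

open ContinuousLinearMap

variable {H : Type*} [NormedAddCommGroup H] [InnerProductSpace ℂ H]
  [CompleteSpace H] [TopologicalSpace.SeparableSpace H]

/-- The absolute value `|A| = (A*A)^(1/2)` of a bounded operator. -/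
noncomputable def absOp (A : H →L[ℂ] H) : H →L[ℂ] H := CFC.sqrt (star A * A)

/-- A symmetry is a self-adjoint unitary: `J = J* = J⁻¹`. -/
def IsSymmetry (J : H →L[ℂ] H) : Prop := IsSelfAdjoint J ∧ J * J = 1


/-- `Q` is the orthogonal projection onto the (closed) subspace `M`. -/
def IsOrthoProjOnto (Q : H →L[ℂ] H) (M : Submodule ℂ H) : Prop :=
  IsSelfAdjoint Q ∧ Q * Q = Q ∧ LinearMap.range (Q : H →ₗ[ℂ] H) = M

theorem stmt_12 (P J Q : H →L[ℂ] H) (hP : P * P = P) (hJ : IsSymmetry J)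
    (hJP : J * P * J = 1 - star P)
    (hQ : IsOrthoProjOnto Q (LinearMap.range (P : H →ₗ[ℂ] H))) :
    Nonempty ((LinearMap.range (P : H →ₗ[ℂ] H) : Submodule ℂ H) ≃ₗᵢ[ℂ]
      ((LinearMap.range (P : H →ₗ[ℂ] H))ᗮ : Submodule ℂ H)) ∧
    Q * J * Q = 0 ∧ (1 - Q) * J * (1 - Q) = 0 := by

  classical
  obtain ⟨hJs, hJ2⟩ := hJ
  obtain ⟨hQs, hQ2, hQr⟩ := hQ
  -- pointwise J∘J = id
  have hJJ : ∀ x : H, J (J x) = x := by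
    intro x
    have := DFunLike.congr_fun hJ2 x
    simpa [ContinuousLinearMap.mul_apply] using this
  -- Q fixes range P
  have hQP : Q * P = P := by
    ext x
    have hx : P x ∈ LinearMap.range (Q : H →ₗ[ℂ] H) := by
      rw [hQr]; exact LinearMap.mem_range_self _ x
    obtain ⟨z, hz⟩ := hx
    have h2 := DFunLike.congr_fun hQ2 z
    simp only [ContinuousLinearMap.mul_apply] at h2 ⊢
    rw [← hz]; exact h2
  have hPQ : P * Q = Q := by
    ext x
    have hx : Q x ∈ LinearMap.range (P : H →ₗ[ℂ] H) := by
      rw [← hQr]; exact LinearMap.mem_range_self _ x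
    obtain ⟨z, hz⟩ := hx
    have h2 := DFunLike.congr_fun hP z
    simp only [ContinuousLinearMap.mul_apply] at h2 ⊢
    rw [← hz]; exact h2
  have hQPs : Q * star P = Q := by
    have := congrArg star hPQ
    simpa [star_mul, hQs.star_eq] using this
  have hPsQ : star P * Q = star P := by
    have := congrArg star hQP
    simpa [star_mul, hQs.star_eq] using this
  -- key algebraic identities
  have hsP : star P = 1 - J * P * J := by
    rw [hJP, sub_sub_cancel]
  have key1 : star P * J * P = 0 := by
    rw [hsP]
    have e1 : (1 - J * P * J) * J * P = J * P - J * P * (J * J) * P := by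
      noncomm_ring
    rw [e1, hJ2]
    have e2 : J * P * 1 * P = J * (P * P) := by noncomm_ring
    rw [e2, hP, sub_self]
  have hPJ : P * J = J - J * star P := by
    calc P * J = (J * J) * (P * J) := by rw [hJ2, one_mul]
      _ = J * (J * P * J) := by noncomm_ring
      _ = J * (1 - star P) := by rw [hJP]
      _ = J - J * star P := by noncomm_ring
  have h1 : Q * J * Q = 0 := by
    calc Q * J * Q = (Q * star P) * J * (P * Q) := by rw [hQPs, hPQ]
      _ = Q * (star P * J * P) * Q := by noncomm_ring
      _ = 0 := by rw [key1]; noncomm_ring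
  have key2 : star P * (1 - Q) = 0 := by
    rw [mul_sub, mul_one, hPsQ, sub_self]
  have key3 : P * J * (1 - Q) = J * (1 - Q) := by
    rw [hPJ]
    calc (J - J * star P) * (1 - Q)
        = J * (1 - Q) - J * (star P * (1 - Q)) := by noncomm_ring
      _ = J * (1 - Q) := by rw [key2, mul_zero, sub_zero]
  have h2 : (1 - Q) * J * (1 - Q) = 0 := by
    have hq : Q * (J * (1 - Q)) = J * (1 - Q) := by
      calc Q * (J * (1 - Q)) = Q * (P * J * (1 - Q)) := by rw [key3]
        _ = (Q * P) * (J * (1 - Q)) := by noncomm_ring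
        _ = P * (J * (1 - Q)) := by rw [hQP]
        _ = J * (1 - Q) := by rw [← mul_assoc]; exact key3
    have e3 : (1 - Q) * J * (1 - Q) = J * (1 - Q) - Q * (J * (1 - Q)) := by
      noncomm_ring
    rw [e3, hq, sub_self]
  -- inner products preserved by J
  have hadj : ContinuousLinearMap.adjoint J = J := by
    rw [← ContinuousLinearMap.star_eq_adjoint, hJs.star_eq]
  have hinner : ∀ x y : H, (inner ℂ (J x) (J y) : ℂ) = inner ℂ x y := by
    intro x y
    calc (inner ℂ (J x) (J y) : ℂ)
        = inner ℂ x (ContinuousLinearMap.adjoint J (J y)) := by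
          rw [ContinuousLinearMap.adjoint_inner_right]
      _ = inner ℂ x y := by rw [hadj, hJJ]
  have hnorm : ∀ x : H, ‖J x‖ = ‖x‖ := by
    intro x
    have h := hinner x x
    rw [inner_self_eq_norm_sq_to_K, inner_self_eq_norm_sq_to_K] at h
    have h' : ‖J x‖ ^ 2 = ‖x‖ ^ 2 := by exact_mod_cast h
    nlinarith [norm_nonneg (J x), norm_nonneg x, h']
  -- J maps range P into its orthocomplement
  have hmem1 : ∀ x ∈ LinearMap.range (P : H →ₗ[ℂ] H), J x ∈ (LinearMap.range (P : H →ₗ[ℂ] H))ᗮ := by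
    rintro _ ⟨y, rfl⟩
    rw [Submodule.mem_orthogonal]
    rintro _ ⟨v, rfl⟩
    have hz : (star P) (J (P y)) = 0 := by
      have := DFunLike.congr_fun key1 y
      simpa [ContinuousLinearMap.mul_apply] using this
    calc (inner ℂ (P v) (J (P y)) : ℂ)
        = inner ℂ v (ContinuousLinearMap.adjoint P (J (P y))) := by
          rw [ContinuousLinearMap.adjoint_inner_right]
      _ = 0 := by
          rw [← ContinuousLinearMap.star_eq_adjoint, hz, inner_zero_right]
  -- J maps the orthocomplement of range P into range P
  have hmem2 : ∀ x ∈ (LinearMap.range (P : H →ₗ[ℂ] H))ᗮ, J x ∈ LinearMap.range (P : H →ₗ[ℂ] H) := by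
    intro x hx
    have hPs : (star P) x = 0 := by
      have hin : (inner ℂ ((star P) x) ((star P) x) : ℂ) = 0 := by
        rw [ContinuousLinearMap.star_eq_adjoint,
          ContinuousLinearMap.adjoint_inner_left]
        exact (Submodule.mem_orthogonal' _ _).mp hx _
          (LinearMap.mem_range_self _ _)
      exact inner_self_eq_zero.mp hin
    have : P (J x) = J x := by
      have := DFunLike.congr_fun hPJ x
      simp only [ContinuousLinearMap.mul_apply, ContinuousLinearMap.sub_apply] at this
      rw [this, hPs, map_zero, sub_zero]
    exact ⟨J x, this⟩
  refine ⟨⟨{ toFun := fun x => ⟨J x, hmem1 x x.2⟩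
             invFun := fun y => ⟨J y, hmem2 y y.2⟩
             map_add' := fun x y => by ext; simp
             map_smul' := fun c x => by ext; simp
             left_inv := fun x => by ext; simp [hJJ]
             right_inv := fun y => by ext; simp [hJJ]
             norm_map' := fun x => by simp [hnorm] }⟩, h1, h2⟩
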